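/- Let $y_0 \geq 4$, set $x = 4(\log y_0)^2$ (so that $y_0 = e^{\frac{1}{2}\sqrt{x}}$), and define $y_{j+1} = y_j(1 + 1/\log y_j)$. Then for all $j \geq 0$, $y_j \geq e^{\frac{1}{2}\sqrt{x + j}}$. -/

import Mathlib

/-- Inductive lower bound in Lemma "basic": with `x = 4 (log y₀)²` (so `y₀ = e^{√x/2}`)
and `y_{j+1} = y_j (1 + 1/log y_j)`, one has `y_j ≥ e^{√(x+j)/2}` for all `j`. -/
theorem stmt2 (y : ℕ → ℝ) (h0 : 4 ≤ y 0)
    (hrec : ∀ j, y (j + 1) = y j * (1 + 1 / Real.log (y j))) :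
    ∀ j : ℕ, Real.exp ((1 / 2) * Real.sqrt (4 * (Real.log (y 0)) ^ 2 + j)) ≤ y j := by
  set x := 4 * (Real.log (y 0)) ^ 2 with hx
  have hy0 : (0:ℝ) < y 0 := by linarith
  have hL0 : 1 ≤ Real.log (y 0) := by
    have he : Real.exp 1 ≤ 4 := by
      nlinarith [Real.exp_one_lt_d9]
    calc 1 = Real.log (Real.exp 1) := (Real.log_exp 1).symm
    _ ≤ Real.log (y 0) := Real.log_le_log (Real.exp_pos 1) (he.trans h0)
  have hx0 : 0 ≤ x := by rw [hx]; positivity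
  have hsx : Real.sqrt x = 2 * Real.log (y 0) := by
    rw [show x = (2 * Real.log (y 0)) ^ 2 by rw [hx]; ring]
    exact Real.sqrt_sq (by linarith)
  intro j
  induction j with
  | zero =>
    have h1 : Real.sqrt (x + (0:ℕ)) = 2 * Real.log (y 0) := by
      push_cast; rw [add_zero, hsx]
    rw [h1, show (1/2 : ℝ) * (2 * Real.log (y 0)) = Real.log (y 0) by ring,
      Real.exp_log hy0]
  | succ j ih =>
    have hxj0 : (0:ℝ) ≤ x + j := by positivity
    have hmono : Real.sqrt x ≤ Real.sqrt (x + j) :=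
      Real.sqrt_le_sqrt (le_add_of_nonneg_right (Nat.cast_nonneg j))
    have hyj : 4 ≤ y j := by
      have h2 : y 0 ≤ Real.exp ((1/2) * Real.sqrt (x + j)) := by
        rw [← Real.exp_log hy0]
        apply Real.exp_le_exp.mpr
        rw [hsx] at hmono; linarith
      linarith [ih]
    have hyjpos : (0:ℝ) < y j := by linarith
    set L := Real.log (y j) with hLdef
    have hL : 1 ≤ L := by
      have he : Real.exp 1 ≤ 4 := by nlinarith [Real.exp_one_lt_d9]
      calc 1 = Real.log (Real.exp 1) := (Real.log_exp 1).symm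
      _ ≤ L := Real.log_le_log (Real.exp_pos 1) (he.trans hyj)
    have hLpos : 0 < L := by linarith
    have hL1 : (0:ℝ) < L + 1 := by linarith
    have hLge : (1/2) * Real.sqrt (x + j) ≤ L := by
      have := Real.log_le_log (Real.exp_pos _) ih
      rwa [Real.log_exp] at this
    have honepos : (0:ℝ) < 1 + 1/L := by positivity
    have hlog : 1/(L+1) ≤ Real.log (1 + 1/L) := by
      have h1 : Real.log ((1 + 1/L)⁻¹) ≤ (1 + 1/L)⁻¹ - 1 :=
        Real.log_le_sub_one_of_pos (by positivity)
      rw [Real.log_inv] at h1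
      have h2 : (1 + 1/L)⁻¹ = L/(L+1) := by field_simp
      have h3 : L/(L+1) - 1 = -(1/(L+1)) := by field_simp; ring
      rw [h2, h3] at h1
      linarith
    rw [hrec j]
    have hy : y j * (1 + 1/L) = Real.exp (L + Real.log (1 + 1/L)) := by
      rw [Real.exp_add, Real.exp_log hyjpos, Real.exp_log honepos]
    rw [hy]
    apply Real.exp_le_exp.mpr
    have hsq : Real.sqrt (x + (j+1:ℕ)) ≤ 2*L + 2/(L+1) := by
      rw [show (2*L + 2/(L+1)) = Real.sqrt ((2*L + 2/(L+1))^2) from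
        (Real.sqrt_sq (by positivity)).symm]
      apply Real.sqrt_le_sqrt
      have hxj : x + j ≤ (2*L)^2 := by
        nlinarith [Real.sq_sqrt hxj0, Real.sqrt_nonneg (x + j)]
      have h8 : (1:ℝ) ≤ 8*L/(L+1) := by
        rw [le_div_iff₀ hL1]; linarith
      push_cast
      have hexp : (2*L + 2/(L+1))^2 = 4*L^2 + 8*L/(L+1) + (2/(L+1))^2 := by ring
      have hq := sq_nonneg (2/(L+1))
      nlinarith [hxj, h8, hq, hexp]
    have h2 : (2:ℝ)/(L+1) = 2*(1/(L+1)) := by ring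
    rw [h2] at hsq
    linarith [hsq, hlog]
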